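/- Let J, K be finite nonempty sets and Φ ⊆ J×K. Then Φ is balanced if and only if every subset J' ⊆ J satisfies |N(J')| ≥ (|K|/|J|)·|J'|. -/

import Mathlib

open scoped BigOperators

namespace Paper

/-- A subset `Φ ⊆ J × K` is balanced if some probability distribution supported inside `Φ`
has uniform marginals on both `J` and `K`. -/
def Balanced {J K : Type*} [Fintype J] [Fintype K] (Φ : Set (J × K)) : Prop :=
  ∃ P : J × K → ℝ, (∀ x, 0 ≤ P x) ∧ (∑ x, P x) = 1 ∧ (∀ x, P x ≠ 0 → x ∈ Φ) ∧
    (∀ j : J, (∑ kk, P (j, kk)) = 1 / (Fintype.card J : ℝ)) ∧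
    (∀ kk : K, (∑ j, P (j, kk)) = 1 / (Fintype.card K : ℝ))

/-- generalized Hall condition: `Φ ⊆ J × K` is balanced iff every `J' ⊆ J`
satisfies `|N(J')| ≥ (|K|/|J|)·|J'|` (stated in cross-multiplied form). -/
theorem statement17 (J K : Type) [Fintype J] [Fintype K] [Nonempty J] [Nonempty K]
    (Φ : Set (J × K)) :
    Balanced Φ ↔ ∀ J' : Set J,
      Fintype.card K * J'.ncard
        ≤ Fintype.card J * { kk : K | ∃ j ∈ J', (j, kk) ∈ Φ }.ncard := by
  classical
  have hn0 : 0 < Fintype.card J := Fintype.card_pos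
  have hm0 : 0 < Fintype.card K := Fintype.card_pos
  have hnR : (0:ℝ) < (Fintype.card J : ℝ) := by exact_mod_cast hn0
  have hmR : (0:ℝ) < (Fintype.card K : ℝ) := by exact_mod_cast hm0
  constructor
  · rintro ⟨P, hP0, _, hPsupp, hProw, hPcol⟩ J'
    set N : Set K := {kk : K | ∃ j ∈ J', (j, kk) ∈ Φ} with hN
    have h1 : (J'.toFinset.card : ℝ) / (Fintype.card J : ℝ)
        = ∑ j ∈ J'.toFinset, ∑ kk, P (j, kk) := by
      rw [Finset.sum_congr rfl (fun j _ => hProw j), Finset.sum_const, nsmul_eq_mul]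
      ring
    have h2 : ∑ j ∈ J'.toFinset, ∑ kk, P (j, kk)
        = ∑ kk ∈ N.toFinset, ∑ j ∈ J'.toFinset, P (j, kk) := by
      rw [Finset.sum_comm]
      symm
      apply Finset.sum_subset (Finset.subset_univ _)
      intro kk _ hkk
      apply Finset.sum_eq_zero
      intro j hj
      by_contra hne
      exact hkk (Set.mem_toFinset.mpr ⟨j, Set.mem_toFinset.mp hj, hPsupp _ hne⟩)
    have h3 : ∑ kk ∈ N.toFinset, ∑ j ∈ J'.toFinset, P (j, kk)
        ≤ ∑ kk ∈ N.toFinset, (1 : ℝ) / (Fintype.card K : ℝ) := by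
      apply Finset.sum_le_sum
      intro kk _
      calc ∑ j ∈ J'.toFinset, P (j, kk) ≤ ∑ j, P (j, kk) :=
            Finset.sum_le_sum_of_subset_of_nonneg (Finset.subset_univ _)
              (fun j _ _ => hP0 _)
        _ = 1 / (Fintype.card K : ℝ) := hPcol kk
    have h4 : ∑ kk ∈ N.toFinset, (1 : ℝ) / (Fintype.card K : ℝ)
        = (N.toFinset.card : ℝ) / (Fintype.card K : ℝ) := by
      rw [Finset.sum_const, nsmul_eq_mul]; ring
    have hle : (J'.toFinset.card : ℝ) / (Fintype.card J : ℝ)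
        ≤ (N.toFinset.card : ℝ) / (Fintype.card K : ℝ) := by
      rw [h1, h2]; rw [h4] at h3; exact h3
    rw [div_le_div_iff₀ hnR hmR] at hle
    rw [Set.ncard_eq_toFinset_card', Set.ncard_eq_toFinset_card']
    have : (Fintype.card K : ℝ) * (J'.toFinset.card : ℝ)
        ≤ (Fintype.card J : ℝ) * (N.toFinset.card : ℝ) := by
      nlinarith [hle]
    exact_mod_cast this
  · intro hHall
    set n := Fintype.card J with hn
    set m := Fintype.card K with hm
    -- Hall setup on blown-up graph
    set t : J × Fin m → Finset (K × Fin n) :=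
      fun x => Finset.univ.filter (fun p => (x.1, p.1) ∈ Φ) with ht
    have hall : ∀ s : Finset (J × Fin m), s.card ≤ (s.biUnion t).card := by
      intro s
      set S1 : Finset J := s.image Prod.fst with hS1
      set NF : Finset K := S1.biUnion (fun j => Finset.univ.filter (fun k => (j, k) ∈ Φ))
        with hNF
      have hsub : s ⊆ S1 ×ˢ Finset.univ := by
        intro x hx
        rw [Finset.mem_product]
        exact ⟨Finset.mem_image.mpr ⟨x, hx, rfl⟩, Finset.mem_univ _⟩
      have hcard1 : s.card ≤ S1.card * m := by
        calc s.card ≤ (S1 ×ˢ (Finset.univ : Finset (Fin m))).card :=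
              Finset.card_le_card hsub
          _ = S1.card * m := by
              rw [Finset.card_product, Finset.card_univ, Fintype.card_fin]
      have hbiU : s.biUnion t = NF ×ˢ (Finset.univ : Finset (Fin n)) := by
        ext p
        simp only [Finset.mem_biUnion, Finset.mem_product, Finset.mem_univ, and_true,
          Finset.mem_filter, Finset.mem_image, true_and, hNF, ht, hS1]
        constructor
        · rintro ⟨x, hx, hxΦ⟩
          exact ⟨x.1, ⟨x, hx, rfl⟩, hxΦ⟩
        · rintro ⟨j, ⟨x, hx, rfl⟩, hjΦ⟩
          exact ⟨x, hx, hjΦ⟩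
      have hH := hHall (↑S1 : Set J)
      have e1 : (↑S1 : Set J).ncard = S1.card := Set.ncard_coe_finset _
      have e2 : {kk : K | ∃ j ∈ (↑S1 : Set J), (j, kk) ∈ Φ} = (↑NF : Set K) := by
        ext kk
        simp [hNF, hS1]
      rw [e1, e2, Set.ncard_coe_finset] at hH
      calc s.card ≤ S1.card * m := hcard1
        _ = m * S1.card := mul_comm _ _
        _ ≤ n * NF.card := hH
        _ = NF.card * n := mul_comm _ _
        _ = (s.biUnion t).card := by
            rw [hbiU, Finset.card_product, Finset.card_univ, Fintype.card_fin]
    obtain ⟨f, hfinj, hf⟩ := (Finset.all_card_le_biUnion_card_iff_existsInjective' t).mp hall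
    have hfbij : Function.Bijective f := by
      rw [Fintype.bijective_iff_injective_and_card]
      exact ⟨hfinj, by simp [Fintype.card_prod, Fintype.card_fin, mul_comm]; rw [← hn, ← hm]⟩
    set P : J × K → ℝ :=
      fun x => ((Finset.univ.filter (fun b : Fin m => (f (x.1, b)).1 = x.2)).card : ℝ)
        / ((n : ℝ) * m) with hP
    have hnm0 : ((n : ℝ) * m) ≠ 0 := by positivity
    have hrow : ∀ j : J, (∑ kk, P (j, kk)) = 1 / (n : ℝ) := by
      intro j
      have hfib : ∑ kk : K,
          (Finset.univ.filter (fun b : Fin m => (f (j, b)).1 = kk)).card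
          = m := by
        rw [← Finset.card_eq_sum_card_fiberwise (fun b _ => Finset.mem_univ ((f (j, b)).1))]
        simp [hm]
      have : (∑ kk, P (j, kk))
          = (∑ kk : K, ((Finset.univ.filter (fun b : Fin m => (f (j, b)).1 = kk)).card : ℝ))
            / ((n : ℝ) * m) := by
        rw [Finset.sum_div]
      rw [this]
      rw [← Nat.cast_sum, hfib]
      field_simp
    have hcol : ∀ kk : K, (∑ j, P (j, kk)) = 1 / (m : ℝ) := by
      intro kk
      have step1 : ∑ j : J,
          (Finset.univ.filter (fun b : Fin m => (f (j, b)).1 = kk)).card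
          = (Finset.univ.filter (fun x : J × Fin m => (f x).1 = kk)).card := by
        simp only [Finset.card_filter]
        rw [Fintype.sum_prod_type]
      have step2 : (Finset.univ.filter (fun x : J × Fin m => (f x).1 = kk)).card
          = (Finset.univ.filter (fun y : K × Fin n => y.1 = kk)).card := by
        apply Finset.card_bij (fun x _ => f x)
        · intro a ha
          simp only [Finset.mem_filter, Finset.mem_univ, true_and] at ha ⊢
          exact ha
        · intro a _ b _ hab
          exact hfinj hab
        · intro b hb
          obtain ⟨a, ha⟩ := hfbij.2 b
          refine ⟨a, ?_, ha⟩
          simp only [Finset.mem_filter, Finset.mem_univ, true_and] at hb ⊢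
          rw [ha]; exact hb
      have step3 : (Finset.univ.filter (fun y : K × Fin n => y.1 = kk)).card = n := by
        have : (Finset.univ.filter (fun y : K × Fin n => y.1 = kk))
            = {kk} ×ˢ (Finset.univ : Finset (Fin n)) := by
          ext y
          simp only [Finset.mem_filter, Finset.mem_univ, true_and, Finset.mem_product,
            Finset.mem_singleton, and_true]
        rw [this, Finset.card_product, Finset.card_singleton, Finset.card_univ,
          Fintype.card_fin, one_mul]
      have : (∑ j, P (j, kk))
          = (∑ j : J, ((Finset.univ.filter (fun b : Fin m => (f (j, b)).1 = kk)).card : ℝ))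
            / ((n : ℝ) * m) := by
        rw [Finset.sum_div]
      rw [this, ← Nat.cast_sum, step1, step2, step3]
      field_simp
    refine ⟨P, fun x => div_nonneg (Nat.cast_nonneg _) (by positivity), ?_, ?_, ?_, ?_⟩
    · rw [Fintype.sum_prod_type]
      rw [Finset.sum_congr rfl (fun j _ => hrow j), Finset.sum_const, Finset.card_univ,
        nsmul_eq_mul]
      rw [← hn]
      field_simp
    · intro x hx
      have hcard : (Finset.univ.filter (fun b : Fin m => (f (x.1, b)).1 = x.2)).card ≠ 0 := by
        intro h
        apply hx
        simp [hP, h]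
      obtain ⟨b, hb⟩ := Finset.card_ne_zero.mp hcard
      simp only [Finset.mem_filter, Finset.mem_univ, true_and] at hb
      have := hf (x.1, b)
      simp only [ht, Finset.mem_filter, Finset.mem_univ, true_and] at this
      rw [hb] at this
      exact (by rw [← Prod.mk.eta (p := x)]; exact this)
    · exact hrow
    · exact hcol

end Paper
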